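/- Let σ_x = [[0,1],[1,0]] and σ_z = [[1,0],[0,−1]] be the Pauli matrices, and for (θ₁, θ₂) ∈ ℝ² define the unit vector ψ(θ₁, θ₂) = exp(i (σ_x + σ_z) θ₂ / √2) · exp(i σ_x θ₁) · (1, 0)ᵀ ∈ ℂ². Then the pure-state quantum Fisher information matrix of this family equals 𝓘(θ | ψ) = [[4, 2√2], [2√2, 3 − cos(4θ₁)]]; that is, 𝓘_{11} = 4, 𝓘_{12} = 𝓘_{21} = 2√2, and 𝓘_{22} = 3 − cos(4θ₁) for all (θ₁, θ₂). -/

import Mathlib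

set_option maxHeartbeats 1000000


noncomputable section

open Matrix

/-- Standard Hermitian inner product on `ℂ^D`, conjugate-linear in the first argument. -/
def dotc {D : ℕ} (x y : Fin D → ℂ) : ℂ := ∑ d, starRingEnd ℂ (x d) * y d

/-- Partial derivative of a parametrized family with respect to the `i`-th parameter. -/
def pder {M D : ℕ} (i : Fin M) (φ : (Fin M → ℝ) → (Fin D → ℂ)) (θ : Fin M → ℝ) :
    Fin D → ℂ :=
  fderiv ℝ φ θ (Pi.single i 1)

/-- Pure-state quantum Fisher information matrix entry
`𝓘_{ij}(θ|φ) = 4 Re[⟨∂_iφ,∂_jφ⟩ − ⟨∂_iφ,φ⟩⟨φ,∂_jφ⟩]`. -/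
def qfim {M D : ℕ} (φ : (Fin M → ℝ) → (Fin D → ℂ)) (θ : Fin M → ℝ) (i j : Fin M) : ℝ :=
  4 * (dotc (pder i φ θ) (pder j φ θ) -
        dotc (pder i φ θ) (φ θ) * dotc (φ θ) (pder j φ θ)).re

/-- The Pauli matrix `σ_x`. -/
def sigmaX : Matrix (Fin 2) (Fin 2) ℂ := !![0, 1; 1, 0]

/-- The Pauli matrix `σ_z`. -/
def sigmaZ : Matrix (Fin 2) (Fin 2) ℂ := !![1, 0; 0, -1]

lemma exp_idem {P : Matrix (Fin 2) (Fin 2) ℂ} (hP : P * P = P) (z : ℂ) :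
    NormedSpace.exp (z • P) = 1 + (Complex.exp z - 1) • P := by
  letI : SeminormedRing (Matrix (Fin 2) (Fin 2) ℂ) := Matrix.linftyOpSemiNormedRing
  letI : NormedRing (Matrix (Fin 2) (Fin 2) ℂ) := Matrix.linftyOpNormedRing
  letI : NormedAlgebra ℂ (Matrix (Fin 2) (Fin 2) ℂ) := Matrix.linftyOpNormedAlgebra
  have hpow : ∀ n : ℕ, P ^ (n + 1) = P := by
    intro n
    induction n with
    | zero => simp
    | succ n ih => rw [pow_succ, ih, hP]
  have hsum : Summable fun n : ℕ => z ^ n / (n.factorial : ℂ) :=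
    NormedSpace.expSeries_div_summable z
  have hsum2 : Summable fun n : ℕ => (z ^ n / (n.factorial : ℂ)) • P ^ n := by
    refine (NormedSpace.expSeries_summable' (𝕂 := ℂ) (z • P)).congr fun n => ?_
    simp [smul_pow, smul_smul, div_eq_inv_mul]
  have h1 : NormedSpace.exp (z • P) = ∑' n : ℕ, (z ^ n / (n.factorial : ℂ)) • P ^ n := by
    rw [NormedSpace.exp_eq_tsum ℂ]
    exact tsum_congr fun n => by simp [smul_pow, smul_smul, div_eq_inv_mul]
  have hsum3 : Summable fun n : ℕ => z ^ (n + 1) / ((n + 1).factorial : ℂ) :=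
    (summable_nat_add_iff 1).2 hsum
  have hexp : Complex.exp z = ∑' n : ℕ, z ^ n / (n.factorial : ℂ) := by
    rw [Complex.exp_eq_exp_ℂ, NormedSpace.exp_eq_tsum_div]
  rw [h1, Summable.tsum_eq_zero_add hsum2]
  have h2 : ∑' n : ℕ, (z ^ (n + 1) / ((n + 1).factorial : ℂ)) • P ^ (n + 1)
      = (∑' n : ℕ, z ^ (n + 1) / ((n + 1).factorial : ℂ)) • P := by
    rw [← Summable.tsum_smul_const hsum3]
    exact tsum_congr fun n => by rw [hpow]
  have h3 : ∑' n : ℕ, z ^ (n + 1) / ((n + 1).factorial : ℂ) = Complex.exp z - 1 := by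
    have := Summable.tsum_eq_zero_add (f := fun n : ℕ => z ^ n / (n.factorial : ℂ)) hsum
    rw [hexp, this]
    simp
  simp only [h2, h3]
  simp


def prj (i : Fin 2) : (Fin 2 → ℝ) →L[ℝ] ℝ := ContinuousLinearMap.proj i

@[simp] lemma prj_apply (i : Fin 2) (v : Fin 2 → ℝ) : prj i v = v i := rfl

def pc (i : Fin 2) : (Fin 2 → ℝ) →L[ℝ] ℂ :=
  Complex.ofRealCLM.comp (ContinuousLinearMap.proj i)

@[simp] lemma pc_apply (i : Fin 2) (v : Fin 2 → ℝ) : pc i v = (v i : ℂ) := rfl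

lemma term_deriv (f g : ℝ → ℝ) {f' g' : ℝ} (k : ℂ) (θ : Fin 2 → ℝ)
    (hf : HasDerivAt f f' (θ 0)) (hg : HasDerivAt g g' (θ 1)) :
    HasFDerivAt (fun θ : Fin 2 → ℝ => (f (θ 0) : ℂ) * (g (θ 1) : ℂ) * k)
      ((((f' : ℂ) * (g (θ 1) : ℂ)) • pc 0 + ((f (θ 0) : ℂ) * (g' : ℂ)) • pc 1).smulRight k) θ := by
  have hproj0 : HasFDerivAt (fun θ : Fin 2 → ℝ => θ 0) (prj 0) θ :=
    (prj 0).hasFDerivAt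
  have hproj1 : HasFDerivAt (fun θ : Fin 2 → ℝ => θ 1) (prj 1) θ :=
    (prj 1).hasFDerivAt
  have h0r : HasFDerivAt (fun θ : Fin 2 → ℝ => f (θ 0))
      (f' • prj 0) θ := hf.comp_hasFDerivAt θ hproj0
  have h1r : HasFDerivAt (fun θ : Fin 2 → ℝ => g (θ 1))
      (g' • prj 1) θ := hg.comp_hasFDerivAt θ hproj1
  have h0 : HasFDerivAt (fun θ : Fin 2 → ℝ => (f (θ 0) : ℂ)) ((f' : ℂ) • pc 0) θ := by
    have := Complex.ofRealCLM.hasFDerivAt.comp θ h0r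
    refine this.congr_fderiv ?_
    ext v
    simp [pc]
  have h1 : HasFDerivAt (fun θ : Fin 2 → ℝ => (g (θ 1) : ℂ)) ((g' : ℂ) • pc 1) θ := by
    have := Complex.ofRealCLM.hasFDerivAt.comp θ h1r
    refine this.congr_fderiv ?_
    ext v
    simp [pc]
  have := (h0.mul h1).mul_const k
  refine this.congr_fderiv ?_
  ext v
  simp
  ring


lemma exp_invol {A : Matrix (Fin 2) (Fin 2) ℂ} (hA : A * A = 1) (z : ℂ) :
    NormedSpace.exp (z • A) =
      Complex.cosh z • (1 : Matrix (Fin 2) (Fin 2) ℂ) + Complex.sinh z • A := by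
  letI : SeminormedRing (Matrix (Fin 2) (Fin 2) ℂ) := Matrix.linftyOpSemiNormedRing
  letI : NormedRing (Matrix (Fin 2) (Fin 2) ℂ) := Matrix.linftyOpNormedRing
  letI : NormedAlgebra ℂ (Matrix (Fin 2) (Fin 2) ℂ) := Matrix.linftyOpNormedAlgebra
  set P : Matrix (Fin 2) (Fin 2) ℂ := (2 : ℂ)⁻¹ • (1 + A) with hPdef
  set Q : Matrix (Fin 2) (Fin 2) ℂ := (2 : ℂ)⁻¹ • (1 - A) with hQdef
  have hP : P * P = P := by
    simp only [hPdef, Matrix.smul_mul, Matrix.mul_smul, add_mul, mul_add, one_mul, mul_one, hA]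
    module
  have hQ : Q * Q = Q := by
    simp only [hQdef, Matrix.smul_mul, Matrix.mul_smul, sub_mul, mul_sub, one_mul, mul_one, hA]
    module
  have hPQ : P * Q = 0 := by
    simp only [hPdef, hQdef, Matrix.smul_mul, Matrix.mul_smul, add_mul, mul_sub, mul_one, one_mul,
      hA]
    module
  have hQP : Q * P = 0 := by
    simp only [hPdef, hQdef, Matrix.smul_mul, Matrix.mul_smul, sub_mul, mul_add, mul_one, one_mul,
      hA]
    module
  have hsplit : z • A = z • P + (-z) • Q := by
    simp only [hPdef, hQdef, smul_smul]
    module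
  have hcomm : Commute (z • P) ((-z) • Q) := by
    unfold Commute SemiconjBy
    simp only [Matrix.smul_mul, Matrix.mul_smul, hPQ, hQP]
    simp
  rw [hsplit, Matrix.exp_add_of_commute _ _ hcomm, exp_idem hP, exp_idem hQ]
  have expand : (1 + (Complex.exp z - 1) • P) * (1 + (Complex.exp (-z) - 1) • Q)
      = 1 + (Complex.exp z - 1) • P + (Complex.exp (-z) - 1) • Q
        + ((Complex.exp z - 1) * (Complex.exp (-z) - 1)) • (P * Q) := by
    simp only [mul_add, add_mul, one_mul, mul_one, Matrix.smul_mul, Matrix.mul_smul, smul_smul]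
    module
  rw [expand, hPQ, smul_zero, add_zero, hPdef, hQdef, Complex.cosh, Complex.sinh]
  simp only [smul_smul]
  module

lemma exp_invol_I {A : Matrix (Fin 2) (Fin 2) ℂ} (hA : A * A = 1) (t : ℝ) :
    NormedSpace.exp ((Complex.I * (t : ℂ)) • A) =
      (Real.cos t : ℂ) • (1 : Matrix (Fin 2) (Fin 2) ℂ) + ((Real.sin t : ℂ) * Complex.I) • A := by
  rw [mul_comm Complex.I, exp_invol hA, Complex.cosh_mul_I, Complex.sinh_mul_I,
    ← Complex.ofReal_cos, ← Complex.ofReal_sin]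

def rc : ℂ := ((Real.sqrt 2 : ℝ) : ℂ)⁻¹

def c0 (θ : Fin 2 → ℝ) : ℂ :=
  (Real.cos (θ 0) : ℂ) * (Real.cos (θ 1) : ℂ) * 1 +
    (Real.sin (θ 0) : ℂ) * (Real.sin (θ 1) : ℂ) * (-rc) +
    (Real.cos (θ 0) : ℂ) * (Real.sin (θ 1) : ℂ) * (rc * Complex.I)

def c1 (θ : Fin 2 → ℝ) : ℂ :=
  (Real.sin (θ 0) : ℂ) * (Real.sin (θ 1) : ℂ) * rc +
    (Real.sin (θ 0) : ℂ) * (Real.cos (θ 1) : ℂ) * Complex.I +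
    (Real.cos (θ 0) : ℂ) * (Real.sin (θ 1) : ℂ) * (rc * Complex.I)

def Psi (θ : Fin 2 → ℝ) : Fin 2 → ℂ := ![c0 θ, c1 θ]

def tCLM (u v k : ℂ) : (Fin 2 → ℝ) →L[ℝ] ℂ := (u • pc 0 + v • pc 1).smulRight k

@[simp] lemma tCLM_apply (u v k : ℂ) (w : Fin 2 → ℝ) :
    tCLM u v k w = (u * (w 0 : ℂ) + v * (w 1 : ℂ)) * k := by
  simp [tCLM, smul_eq_mul]

lemma term_deriv' (f g : ℝ → ℝ) {f' g' : ℝ} (k : ℂ) (θ : Fin 2 → ℝ)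
    (hf : HasDerivAt f f' (θ 0)) (hg : HasDerivAt g g' (θ 1)) :
    HasFDerivAt (fun θ : Fin 2 → ℝ => (f (θ 0) : ℂ) * (g (θ 1) : ℂ) * k)
      (tCLM ((f' : ℂ) * (g (θ 1) : ℂ)) ((f (θ 0) : ℂ) * (g' : ℂ)) k) θ :=
  term_deriv f g k θ hf hg

def L0 (θ : Fin 2 → ℝ) : (Fin 2 → ℝ) →L[ℝ] ℂ :=
  tCLM ((-Real.sin (θ 0) : ℝ) * (Real.cos (θ 1) : ℂ))
      ((Real.cos (θ 0) : ℂ) * (-Real.sin (θ 1) : ℝ)) 1 +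
    tCLM ((Real.cos (θ 0) : ℝ) * (Real.sin (θ 1) : ℂ))
      ((Real.sin (θ 0) : ℂ) * (Real.cos (θ 1) : ℝ)) (-rc) +
    tCLM ((-Real.sin (θ 0) : ℝ) * (Real.sin (θ 1) : ℂ))
      ((Real.cos (θ 0) : ℂ) * (Real.cos (θ 1) : ℝ)) (rc * Complex.I)

def L1 (θ : Fin 2 → ℝ) : (Fin 2 → ℝ) →L[ℝ] ℂ :=
  tCLM ((Real.cos (θ 0) : ℝ) * (Real.sin (θ 1) : ℂ))
      ((Real.sin (θ 0) : ℂ) * (Real.cos (θ 1) : ℝ)) rc +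
    tCLM ((Real.cos (θ 0) : ℝ) * (Real.cos (θ 1) : ℂ))
      ((Real.sin (θ 0) : ℂ) * (-Real.sin (θ 1) : ℝ)) Complex.I +
    tCLM ((-Real.sin (θ 0) : ℝ) * (Real.sin (θ 1) : ℂ))
      ((Real.cos (θ 0) : ℂ) * (Real.cos (θ 1) : ℝ)) (rc * Complex.I)

lemma hasFDerivAt_c0 (θ : Fin 2 → ℝ) : HasFDerivAt c0 (L0 θ) θ := by
  exact ((term_deriv' Real.cos Real.cos 1 θ (Real.hasDerivAt_cos _) (Real.hasDerivAt_cos _)).add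
    (term_deriv' Real.sin Real.sin (-rc) θ (Real.hasDerivAt_sin _) (Real.hasDerivAt_sin _))).add
    (term_deriv' Real.cos Real.sin (rc * Complex.I) θ (Real.hasDerivAt_cos _)
      (Real.hasDerivAt_sin _))

lemma hasFDerivAt_c1 (θ : Fin 2 → ℝ) : HasFDerivAt c1 (L1 θ) θ := by
  exact ((term_deriv' Real.sin Real.sin rc θ (Real.hasDerivAt_sin _) (Real.hasDerivAt_sin _)).add
    (term_deriv' Real.sin Real.cos Complex.I θ (Real.hasDerivAt_sin _)
      (Real.hasDerivAt_cos _))).add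
    (term_deriv' Real.cos Real.sin (rc * Complex.I) θ (Real.hasDerivAt_cos _)
      (Real.hasDerivAt_sin _))

lemma hasFDerivAt_Psi (θ : Fin 2 → ℝ) :
    HasFDerivAt Psi (ContinuousLinearMap.pi ![L0 θ, L1 θ]) θ := by
  have h : HasFDerivAt (fun x i => (![c0, c1] : Fin 2 → (Fin 2 → ℝ) → ℂ) i x)
      (ContinuousLinearMap.pi ![L0 θ, L1 θ]) θ := by
    refine hasFDerivAt_pi.2 fun i => ?_
    fin_cases i
    · exact hasFDerivAt_c0 θ
    · exact hasFDerivAt_c1 θ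
  convert h using 1
  funext x
  funext i
  fin_cases i <;> rfl


lemma sigmaX_sq : sigmaX * sigmaX = 1 := by
  simp [sigmaX, Matrix.mul_fin_two, Matrix.one_fin_two]

def Hmat : Matrix (Fin 2) (Fin 2) ℂ := rc • (sigmaX + sigmaZ)

lemma Hmat_sq : Hmat * Hmat = 1 := by
  have h2 : ((Real.sqrt 2 : ℝ) : ℂ) * ((Real.sqrt 2 : ℝ) : ℂ) = 2 := by
    rw [← Complex.ofReal_mul, Real.mul_self_sqrt (by norm_num)]
    norm_num
  have hne : ((Real.sqrt 2 : ℝ) : ℂ) ≠ 0 :=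
    Complex.ofReal_ne_zero.2 (by positivity)
  rw [Hmat, Matrix.smul_mul, Matrix.mul_smul, smul_smul, rc]
  have hS : (sigmaX + sigmaZ) * (sigmaX + sigmaZ) = (2 : ℂ) • 1 := by
    ext i j
    fin_cases i <;> fin_cases j <;>
      norm_num [sigmaX, sigmaZ, Matrix.mul_apply, Fin.sum_univ_two, Matrix.one_apply]
  rw [hS, smul_smul]
  rw [show (((Real.sqrt 2:ℝ):ℂ))⁻¹ * (((Real.sqrt 2:ℝ):ℂ))⁻¹ * 2 = 1 by
    rw [← mul_inv, h2]
    norm_num]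
  simp

theorem test_psi_eq
    (ψ : (Fin 2 → ℝ) → (Fin 2 → ℂ))
    (hψ : ∀ θ, ψ θ =
      (NormedSpace.exp ((Complex.I * (θ 1 : ℂ) / (Real.sqrt 2 : ℂ)) • (sigmaX + sigmaZ)) *
        NormedSpace.exp ((Complex.I * (θ 0 : ℂ)) • sigmaX)).mulVec ![1, 0]) :
    ψ = Psi := by
  funext θ
  rw [hψ θ]
  have e1 : (Complex.I * (θ 1 : ℂ) / (Real.sqrt 2 : ℂ)) • (sigmaX + sigmaZ)
      = (Complex.I * ((θ 1 : ℝ) : ℂ)) • Hmat := by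
    rw [Hmat, smul_smul, rc]
    congr 1
  rw [e1, exp_invol_I Hmat_sq, exp_invol_I sigmaX_sq]
  funext d
  fin_cases d
  · show _ = c0 θ
    simp [Matrix.mulVec, Matrix.mul_apply, Fin.sum_univ_two, dotProduct, Hmat, sigmaX,
      sigmaZ, Matrix.smul_apply, Matrix.one_apply, Matrix.add_apply, c0, rc]
    ring_nf
    simp only [Complex.I_sq]
    ring
  · show _ = c1 θ
    simp [Matrix.mulVec, Matrix.mul_apply, Fin.sum_univ_two, dotProduct, Hmat, sigmaX,
      sigmaZ, Matrix.smul_apply, Matrix.one_apply, Matrix.add_apply, c1, rc]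
    ring_nf
    simp only [Complex.I_sq]
    ring


/-- **The qubit example of the paper.** For
`ψ(θ) = exp(i(σ_x+σ_z)θ₂/√2) exp(iσ_x θ₁) |0⟩`, the QFIM is
`[[4, 2√2], [2√2, 3 − cos 4θ₁]]`. -/
theorem qubit_example_qfim
    (ψ : (Fin 2 → ℝ) → (Fin 2 → ℂ))
    (hψ : ∀ θ, ψ θ =
      (NormedSpace.exp ((Complex.I * (θ 1 : ℂ) / (Real.sqrt 2 : ℂ)) • (sigmaX + sigmaZ)) *
        NormedSpace.exp ((Complex.I * (θ 0 : ℂ)) • sigmaX)).mulVec ![1, 0]) :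
    ∀ θ : Fin 2 → ℝ,
      qfim ψ θ 0 0 = 4 ∧
      qfim ψ θ 0 1 = 2 * Real.sqrt 2 ∧
      qfim ψ θ 1 0 = 2 * Real.sqrt 2 ∧
      qfim ψ θ 1 1 = 3 - Real.cos (4 * θ 0) := by
  have hfun : ψ = Psi := test_psi_eq ψ hψ
  intro θ
  have hfd : fderiv ℝ Psi θ = ContinuousLinearMap.pi ![L0 θ, L1 θ] :=
    (hasFDerivAt_Psi θ).fderiv
  have hrc : rc = (((Real.sqrt 2)⁻¹ : ℝ) : ℂ) := by simp [rc]
  rw [hfun] at hψ ⊢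
  have hp : ∀ i : Fin 2, pder i Psi θ =
      fun d => (![L0 θ, L1 θ] : Fin 2 → (Fin 2 → ℝ) →L[ℝ] ℂ) d (Pi.single i 1) := by
    intro i
    funext d
    rw [pder, hfd]
    rfl
  refine ⟨?_, ?_, ?_, ?_⟩
  · simp only [qfim, hp, dotc, Fin.sum_univ_two]
    simp [L0, L1, tCLM_apply, ContinuousLinearMap.add_apply, Psi, c0, c1, hrc,
      Pi.single_apply, Matrix.cons_val_zero, Matrix.cons_val_one, Matrix.head_cons,
      Complex.add_re, Complex.sub_re, Complex.mul_re, Complex.mul_im, Complex.add_im,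
      Complex.ofReal_re, Complex.ofReal_im, Complex.I_re, Complex.I_im,
      _root_.map_add, _root_.map_mul, _root_.map_neg, Complex.conj_ofReal, Complex.conj_I,
      Complex.cos_ofReal_re, Complex.cos_ofReal_im, Complex.sin_ofReal_re, Complex.sin_ofReal_im]
    have h1 : Real.sin (θ 0) ^ 2 + Real.cos (θ 0) ^ 2 = 1 := Real.sin_sq_add_cos_sq _
    have h2 : Real.sin (θ 1) ^ 2 + Real.cos (θ 1) ^ 2 = 1 := Real.sin_sq_add_cos_sq _
    have hR : Real.sqrt 2 ^ 2 = 2 := Real.sq_sqrt (by norm_num)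
    linear_combination ((1/2)*(Real.cos (θ 0))^2*(Real.sin (θ 1))^2 + (1/2)*(Real.sin (θ 0))^2*(Real.sin (θ 1))^2) * hR + ((Real.cos (θ 0))^2 + (Real.sin (θ 0))^2) * h2 + h1
  · simp only [qfim, hp, dotc, Fin.sum_univ_two]
    simp [L0, L1, tCLM_apply, ContinuousLinearMap.add_apply, Psi, c0, c1, hrc,
      Pi.single_apply, Matrix.cons_val_zero, Matrix.cons_val_one, Matrix.head_cons,
      Complex.add_re, Complex.sub_re, Complex.mul_re, Complex.mul_im, Complex.add_im,
      Complex.ofReal_re, Complex.ofReal_im, Complex.I_re, Complex.I_im,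
      _root_.map_add, _root_.map_mul, _root_.map_neg, Complex.conj_ofReal, Complex.conj_I,
      Complex.cos_ofReal_re, Complex.cos_ofReal_im, Complex.sin_ofReal_re, Complex.sin_ofReal_im]
    have h1 : Real.sin (θ 0) ^ 2 + Real.cos (θ 0) ^ 2 = 1 := Real.sin_sq_add_cos_sq _
    have h2 : Real.sin (θ 1) ^ 2 + Real.cos (θ 1) ^ 2 = 1 := Real.sin_sq_add_cos_sq _
    have hR : Real.sqrt 2 ^ 2 = 2 := Real.sq_sqrt (by norm_num)
    linear_combination ((2)*(Real.cos (θ 0))^2*(Real.sqrt 2) + (2)*(Real.sin (θ 0))^2*(Real.sqrt 2)) * h2 + ((2)*(Real.sqrt 2)) * h1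
  · simp only [qfim, hp, dotc, Fin.sum_univ_two]
    simp [L0, L1, tCLM_apply, ContinuousLinearMap.add_apply, Psi, c0, c1, hrc,
      Pi.single_apply, Matrix.cons_val_zero, Matrix.cons_val_one, Matrix.head_cons,
      Complex.add_re, Complex.sub_re, Complex.mul_re, Complex.mul_im, Complex.add_im,
      Complex.ofReal_re, Complex.ofReal_im, Complex.I_re, Complex.I_im,
      _root_.map_add, _root_.map_mul, _root_.map_neg, Complex.conj_ofReal, Complex.conj_I,
      Complex.cos_ofReal_re, Complex.cos_ofReal_im, Complex.sin_ofReal_re, Complex.sin_ofReal_im]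
    have h1 : Real.sin (θ 0) ^ 2 + Real.cos (θ 0) ^ 2 = 1 := Real.sin_sq_add_cos_sq _
    have h2 : Real.sin (θ 1) ^ 2 + Real.cos (θ 1) ^ 2 = 1 := Real.sin_sq_add_cos_sq _
    have hR : Real.sqrt 2 ^ 2 = 2 := Real.sq_sqrt (by norm_num)
    linear_combination ((2)*(Real.cos (θ 0))^2*(Real.sqrt 2) + (2)*(Real.sin (θ 0))^2*(Real.sqrt 2)) * h2 + ((2)*(Real.sqrt 2)) * h1
  · simp only [qfim, hp, dotc, Fin.sum_univ_two]
    simp [L0, L1, tCLM_apply, ContinuousLinearMap.add_apply, Psi, c0, c1, hrc,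
      Pi.single_apply, Matrix.cons_val_zero, Matrix.cons_val_one, Matrix.head_cons,
      Complex.add_re, Complex.sub_re, Complex.mul_re, Complex.mul_im, Complex.add_im,
      Complex.ofReal_re, Complex.ofReal_im, Complex.I_re, Complex.I_im,
      _root_.map_add, _root_.map_mul, _root_.map_neg, Complex.conj_ofReal, Complex.conj_I,
      Complex.cos_ofReal_re, Complex.cos_ofReal_im, Complex.sin_ofReal_re, Complex.sin_ofReal_im]
    have h1 : Real.sin (θ 0) ^ 2 + Real.cos (θ 0) ^ 2 = 1 := Real.sin_sq_add_cos_sq _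
    have h2 : Real.sin (θ 1) ^ 2 + Real.cos (θ 1) ^ 2 = 1 := Real.sin_sq_add_cos_sq _
    have hR : Real.sqrt 2 ^ 2 = 2 := Real.sq_sqrt (by norm_num)
    rw [show (4:ℝ) * θ 0 = 2 * (2 * θ 0) by ring, Real.cos_two_mul, Real.cos_two_mul]
    linear_combination ((2)*(Real.cos (θ 0))^2*(Real.cos (θ 1))^2 + (-1)*(Real.cos (θ 0))^4*(Real.cos (θ 1))^4 + (-1)*(Real.cos (θ 0))^4*(Real.sin (θ 1))^2*(Real.cos (θ 1))^2*(Real.sqrt 2)^2 + (-1)*(Real.cos (θ 0))^4*(Real.sin (θ 1))^4 + (2)*(Real.sin (θ 0))^2*(Real.cos (θ 1))^2 + (2)*(Real.sin (θ 0))^2*(Real.cos (θ 0))^2*(Real.cos (θ 1))^4 + (8)*(Real.sin (θ 0))^2*(Real.cos (θ 0))^2*(Real.sin (θ 1))^2*(Real.cos (θ 1))^2 + (-2)*(Real.sin (θ 0))^2*(Real.cos (θ 0))^2*(Real.sin (θ 1))^2*(Real.cos (θ 1))^2*(Real.sqrt 2)^2 + (2)*(Real.sin (θ 0))^2*(Real.cos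 (θ 0))^2*(Real.sin (θ 1))^4 + (-1)*(Real.sin (θ 0))^4*(Real.cos (θ 1))^4 + (-1)*(Real.sin (θ 0))^4*(Real.sin (θ 1))^2*(Real.cos (θ 1))^2*(Real.sqrt 2)^2 + (-1)*(Real.sin (θ 0))^4*(Real.sin (θ 1))^4) * hR + ((4)*(Real.cos (θ 0))^2 + (-2)*(Real.cos (θ 0))^4 + (-2)*(Real.cos (θ 0))^4*(Real.cos (θ 1))^2 + (-2)*(Real.cos (θ 0))^4*(Real.sin (θ 1))^2 + (4)*(Real.sin (θ 0))^2 + (4)*(Real.sin (θ 0))^2*(Real.cos (θ 0))^2 + (4)*(Real.sin (θ 0))^2*(Real.cos (θ 0))^2*(Real.cos (θ 1))^2 + (4)*(Real.sin (θ 0))^2*(Real.cos (θ 0))^2*(Real.sin (θ 1))^2 + (-2)*(Real.sin (θ 0))^4 + (-2)*(Real.sin (θ 0))^4*(Real.cos (θ 1))^2 + (-2)*(Real.sin (θ 0))^4*(Real.sin (θ 1))^2) * h2 + ((2) + (6)*(Real.cos (θ 0))^2 + (-2)*(Real.sin (θ 0))^2) * h1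

end
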